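/- For any fixed v in (0,1), the sum over k from 0 to m of the absolute values of the derivatives of the Bernstein basis polynomials, i.e. ∑_{k=0}^m |d/dv [C(m,k) v^k (1-v)^{m-k}]|, is O(m^{1/2}) as m → ∞; more precisely it is asymptotically equivalent to sqrt(2/π) · m^{1/2} / sqrt(v(1-v)). -/

import Mathlib

open Filter Real Stirling Nat Topology

/-- Bernstein basis polynomial `P_{m,k}(v) = C(m,k) v^k (1-v)^{m-k}`. -/
noncomputable def bern (m k : ℕ) (v : ℝ) : ℝ := (m.choose k : ℝ) * v ^ k * (1 - v) ^ (m - k)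

lemma bern_eval (m k : ℕ) (v : ℝ) : (bernsteinPolynomial ℝ m k).eval v = bern m k v := by
  simp [bernsteinPolynomial, bern]

lemma bern_nonneg {v : ℝ} (h0 : 0 ≤ v) (h1 : v ≤ 1) (m k : ℕ) : 0 ≤ bern m k v := by
  apply mul_nonneg (mul_nonneg (by positivity) (by positivity))
  exact pow_nonneg (by linarith) _

lemma deriv_bern (m k : ℕ) (v : ℝ) :
    deriv (bern m k) v = ((bernsteinPolynomial ℝ m k).derivative).eval v := by
  have : bern m k = fun x => (bernsteinPolynomial ℝ m k).eval x :=
    funext fun x => (bern_eval m k x).symm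
  rw [this, Polynomial.deriv]

lemma deriv_bern_zero (m : ℕ) (v : ℝ) :
    deriv (bern m 0) v = -(m:ℝ) * bern (m-1) 0 v := by
  rw [deriv_bern, bernsteinPolynomial.derivative_zero]
  simp [bern_eval]

lemma deriv_bern_succ (m j : ℕ) (v : ℝ) :
    deriv (bern m (j+1)) v = (m:ℝ) * (bern (m-1) j v - bern (m-1) (j+1) v) := by
  rw [deriv_bern, bernsteinPolynomial.derivative_succ]
  simp [bern_eval]

lemma bern_mono_le {v : ℝ} (h0 : 0 < v) (h1 : v < 1) {n j : ℕ}
    (h : (j:ℝ) + 1 ≤ ((n:ℝ)+1) * v) : bern n j v ≤ bern n (j+1) v := by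
  have hjn : j < n := by
    by_contra hc
    push_neg at hc
    have : ((n:ℝ)+1) * v < (n:ℝ)+1 := by nlinarith
    have : (n:ℝ) ≤ j := Nat.cast_le.2 hc
    linarith
  have hcast : ((n.choose (j+1) : ℝ)) * (j+1) = (n.choose j : ℝ) * ((n:ℝ) - j) := by
    have := Nat.choose_succ_right_eq n j
    have h2 : ((n.choose (j+1) * (j+1) : ℕ) : ℝ) = ((n.choose j * (n - j) : ℕ) : ℝ) := by
      exact_mod_cast congrArg (Nat.cast (R := ℝ)) this
    push_cast [Nat.cast_sub hjn.le] at h2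
    exact_mod_cast h2
  have hq : 0 < 1 - v := by linarith
  have hpow : (1-v)^(n-j) = (1-v)^(n-j-1) * (1-v) := by
    rw [← pow_succ]
    congr 1
    omega
  have hpow2 : n - (j+1) = n - j - 1 := by omega
  have key : bern n (j+1) v * ((j:ℝ)+1) - bern n j v * ((j:ℝ)+1) =
      (n.choose j : ℝ) * v^j * (1-v)^(n-j-1) * (((n:ℝ)+1)*v - ((j:ℝ)+1)) := by
    simp only [bern, hpow2, hpow]
    rw [show ((j:ℝ)+1) = ((j+1 : ℕ) : ℝ) by push_cast; ring]
    rw [show (n.choose (j+1) : ℝ) * v ^ (j+1) * (1-v)^(n-j-1) * ((j+1:ℕ):ℝ)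
        = ((n.choose (j+1) : ℝ) * ((j+1:ℕ):ℝ)) * (v ^ (j+1) * (1-v)^(n-j-1)) by ring]
    push_cast at hcast ⊢
    rw [hcast]
    ring
  nlinarith [pow_nonneg h0.le j, pow_nonneg hq.le (n-j-1),
    mul_nonneg (mul_nonneg (Nat.cast_nonneg (n.choose j)) (pow_nonneg h0.le j)) (pow_nonneg hq.le (n-j-1))]

lemma bern_anti_le {v : ℝ} (h0 : 0 < v) (h1 : v < 1) {n j : ℕ}
    (h : ((n:ℝ)+1) * v ≤ (j:ℝ) + 1) : bern n (j+1) v ≤ bern n j v := by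
  rcases le_or_gt n j with hjn | hjn
  · have : bern n (j+1) v = 0 := by
      simp [bern, Nat.choose_eq_zero_of_lt (by omega : n < j+1)]
    rw [this]
    exact bern_nonneg h0.le h1.le n j
  · have hcast : ((n.choose (j+1) : ℝ)) * (j+1) = (n.choose j : ℝ) * ((n:ℝ) - j) := by
      have := Nat.choose_succ_right_eq n j
      have h2 : ((n.choose (j+1) * (j+1) : ℕ) : ℝ) = ((n.choose j * (n - j) : ℕ) : ℝ) := by
        exact_mod_cast congrArg (Nat.cast (R := ℝ)) this
      push_cast [Nat.cast_sub hjn.le] at h2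
      exact_mod_cast h2
    have hq : 0 < 1 - v := by linarith
    have hpow : (1-v)^(n-j) = (1-v)^(n-j-1) * (1-v) := by
      rw [← pow_succ]; congr 1; omega
    have hpow2 : n - (j+1) = n - j - 1 := by omega
    have key : bern n (j+1) v * ((j:ℝ)+1) - bern n j v * ((j:ℝ)+1) =
        (n.choose j : ℝ) * v^j * (1-v)^(n-j-1) * (((n:ℝ)+1)*v - ((j:ℝ)+1)) := by
      simp only [bern, hpow2, hpow]
      rw [show ((j:ℝ)+1) = ((j+1 : ℕ) : ℝ) by push_cast; ring]
      rw [show (n.choose (j+1) : ℝ) * v ^ (j+1) * (1-v)^(n-j-1) * ((j+1:ℕ):ℝ)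
          = ((n.choose (j+1) : ℝ) * ((j+1:ℕ):ℝ)) * (v ^ (j+1) * (1-v)^(n-j-1)) by ring]
      push_cast at hcast ⊢
      rw [hcast]
      ring
    nlinarith [mul_nonneg (mul_nonneg (Nat.cast_nonneg (n.choose j)) (pow_nonneg h0.le j)) (pow_nonneg hq.le (n-j-1))]

lemma sum_abs_deriv {v : ℝ} (h0 : 0 < v) (h1 : v < 1) {m : ℕ} (hm : 1 ≤ m) :
    ∑ k ∈ Finset.range (m + 1), |deriv (bern m k) v| =
      2 * m * bern (m-1) ⌊(m:ℝ)*v⌋₊ v := by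
  set n := m - 1 with hn
  have hmn : m = n + 1 := by omega
  set t := ⌊(m:ℝ)*v⌋₊ with ht
  have hq : 0 < 1 - v := by linarith
  have htm : t ≤ n := by
    have h2 : ((t:ℝ)) ≤ (m:ℝ)*v := Nat.floor_le (by positivity)
    have h3 : (m:ℝ)*v < m := by nlinarith [(Nat.cast_pos (α := ℝ)).2 hm]
    have h4 : (t:ℝ) < (m:ℝ) := lt_of_le_of_lt h2 h3
    have h5 : t < m := by exact_mod_cast h4
    omega
  have habs : ∀ j, |bern n j v - bern n (j+1) v|
      = if j < t then bern n (j+1) v - bern n j v else bern n j v - bern n (j+1) v := by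
    intro j
    split_ifs with hj
    · rw [abs_sub_comm, abs_of_nonneg]
      have : (j:ℝ) + 1 ≤ ((n:ℝ)+1)*v := by
        have hjt : ((j:ℝ)+1) ≤ (t:ℝ) := by exact_mod_cast Nat.succ_le_of_lt hj
        have h2 : (t:ℝ) ≤ (m:ℝ)*v := Nat.floor_le (by positivity)
        have hm' : (m:ℝ) = (n:ℝ) + 1 := by push_cast [hmn]; ring
        rw [hm'] at h2
        linarith
      linarith [bern_mono_le h0 h1 this]
    · rw [abs_of_nonneg]
      have : ((n:ℝ)+1)*v ≤ (j:ℝ) + 1 := by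
        have h2 : (m:ℝ)*v < (t:ℝ) + 1 := Nat.lt_floor_add_one _
        have h3 : (t:ℝ) ≤ (j:ℝ) := by exact_mod_cast Nat.not_lt.1 hj
        push_cast [hmn] at h2 ⊢
        linarith
      linarith [bern_anti_le h0 h1 this]
  -- rewrite the sum
  rw [Finset.sum_range_succ']
  have hterm : ∀ j, |deriv (bern m (j+1)) v| = (m:ℝ) * |bern n j v - bern n (j+1) v| := by
    intro j
    rw [deriv_bern_succ, abs_mul, abs_of_nonneg (by positivity : (0:ℝ) ≤ (m:ℝ))]
  have hzero : |deriv (bern m 0) v| = (m:ℝ) * bern n 0 v := by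
    rw [deriv_bern_zero, abs_mul, abs_neg, abs_of_nonneg (by positivity : (0:ℝ) ≤ (m:ℝ)),
      abs_of_nonneg (bern_nonneg h0.le h1.le n 0)]
  simp only [hterm, hzero, ← Finset.mul_sum]
  rw [← mul_add]
  have hsplit : ∑ j ∈ Finset.range m, |bern n j v - bern n (j+1) v|
      = (∑ j ∈ Finset.range t, (bern n (j+1) v - bern n j v))
        + ∑ j ∈ Finset.Ico t m, (bern n j v - bern n (j+1) v) := by
    rw [Finset.range_eq_Ico, ← Finset.sum_Ico_consecutive _ (Nat.zero_le t) (by omega : t ≤ m),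
      ← Finset.range_eq_Ico]
    congr 1
    · exact Finset.sum_congr rfl fun j hj => by
        rw [habs j, if_pos (Finset.mem_range.1 hj)]
    · exact Finset.sum_congr rfl fun j hj => by
        rw [habs j, if_neg (Nat.not_lt.2 (Finset.mem_Ico.1 hj).1)]
  rw [hsplit]
  have h1' : ∑ j ∈ Finset.range t, (bern n (j+1) v - bern n j v) = bern n t v - bern n 0 v :=
    Finset.sum_range_sub (fun j => bern n j v) t
  have h2' : ∑ j ∈ Finset.Ico t m, (bern n j v - bern n (j+1) v) = bern n t v - bern n m v := by
    rw [Finset.sum_Ico_eq_sum_range]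
    have := Finset.sum_range_sub' (fun i => bern n (t+i) v) (m - t)
    calc ∑ i ∈ Finset.range (m-t), (bern n (t+i) v - bern n (t+i+1) v)
        = ∑ i ∈ Finset.range (m-t), ((fun i => bern n (t+i) v) i - (fun i => bern n (t+i) v) (i+1)) := by
          apply Finset.sum_congr rfl; intro i _; simp [Nat.add_assoc]
      _ = bern n (t+0) v - bern n (t+(m-t)) v := Finset.sum_range_sub' (fun i => bern n (t+i) v) (m - t)
      _ = bern n t v - bern n m v := by rw [Nat.add_zero, Nat.add_sub_cancel' (by omega : t ≤ m)]
  have h3' : bern n m v = 0 := by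
    simp [bern, Nat.choose_eq_zero_of_lt (by omega : n < m)]
  rw [h1', h2', h3']
  ring

lemma stirling_pos {n : ℕ} (h : 1 ≤ n) : 0 < stirlingSeq n := by
  obtain ⟨k, rfl⟩ : ∃ k, n = k + 1 := ⟨n - 1, by omega⟩
  exact stirlingSeq'_pos k

lemma factorial_eq {n : ℕ} (h : 1 ≤ n) :
    (n ! : ℝ) = stirlingSeq n * (Real.sqrt (2*n) * ((n:ℝ)/Real.exp 1)^n) := by
  have hd : Real.sqrt (2*n) * ((n:ℝ)/Real.exp 1)^n ≠ 0 := by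
    have hn : (0:ℝ) < n := by exact_mod_cast h
    positivity
  rw [stirlingSeq] at *
  field_simp

lemma bern_factorization {p : ℝ} (h0 : 0 < p) (h1 : p < 1) (m j : ℕ)
    (hj1 : 1 ≤ j) (hj2 : j + 1 ≤ m) :
    Real.sqrt m * bern m j p =
      (stirlingSeq m / (stirlingSeq j * stirlingSeq (m-j))) *
      Real.sqrt ((m:ℝ)*m/(2*j*(m-j))) *
      (((m:ℝ)*p/j)^j * ((m:ℝ)*(1-p)/((m:ℝ)-(j:ℝ)))^(m-j)) := by
  set mj := m - j with hmjdef
  have hmj1 : 1 ≤ mj := by omega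
  have hmjc : ((mj:ℕ):ℝ) = (m:ℝ) - (j:ℝ) := by
    push_cast [hmjdef, Nat.cast_sub (by omega : j ≤ m)]; ring
  have hm1 : 1 ≤ m := by omega
  have hmpos : (0:ℝ) < m := by exact_mod_cast hm1
  have hjpos : (0:ℝ) < j := by exact_mod_cast hj1
  have hmjpos : (0:ℝ) < mj := by exact_mod_cast hmj1
  have hq : (0:ℝ) < 1 - p := by linarith
  have hAm := stirling_pos hm1
  have hAj := stirling_pos hj1
  have hAmj := stirling_pos hmj1
  have hchoose : (m.choose j : ℝ) = (m ! : ℝ) / ((j ! : ℝ) * (mj ! : ℝ)) := by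
    rw [Nat.cast_choose ℝ (by omega : j ≤ m)]
  have hsq : Real.sqrt ((m:ℝ)*m/(2*j*mj)) =
      Real.sqrt m * Real.sqrt (2*m) / (Real.sqrt (2*j) * Real.sqrt (2*mj)) := by
    have : (m:ℝ)*m/(2*j*mj) = ((m:ℝ)*(2*m))/((2*j)*(2*mj)) := by
      field_simp
    rw [this, Real.sqrt_div (by positivity), Real.sqrt_mul (by positivity),
      Real.sqrt_mul (by positivity : (0:ℝ) ≤ 2*(j:ℝ))]
  have hpowm : ((m:ℝ))^m = (m:ℝ)^j * (m:ℝ)^mj := by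
    rw [← pow_add]; congr 1; omega
  have hpowe : (Real.exp 1)^m = (Real.exp 1)^j * (Real.exp 1)^mj := by
    rw [← pow_add]; congr 1; omega
  have hbern : bern m j p = (m.choose j : ℝ) * p^j * (1-p)^mj := rfl
  rw [hbern, hchoose, factorial_eq hm1, factorial_eq hj1, factorial_eq hmj1, ← hmjc, hsq]
  rw [div_pow, div_pow, div_pow, hpowm, hpowe]
  have hsm : (0:ℝ) < Real.sqrt (2*m) := Real.sqrt_pos.2 (by positivity)
  have hsj : (0:ℝ) < Real.sqrt (2*j) := Real.sqrt_pos.2 (by positivity)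
  have hsmj : (0:ℝ) < Real.sqrt (2*mj) := Real.sqrt_pos.2 (by positivity)
  have he : (0:ℝ) < Real.exp 1 := Real.exp_pos 1
  field_simp
  rw [div_pow, div_pow, mul_pow, mul_pow]
  field_simp

lemma ev_lb {p : ℝ} (h0 : 0 < p) (c : ℝ) : ∀ᶠ m : ℕ in atTop, c ≤ (m:ℝ) * p := by
  have : Tendsto (fun m : ℕ => (m:ℝ) * p) atTop atTop :=
    (tendsto_natCast_atTop_atTop).atTop_mul_const h0
  exact this.eventually_ge_atTop c

lemma key_tendsto {p : ℝ} (h0 : 0 < p) (h1 : p < 1) (j : ℕ → ℕ)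
    (hj : ∀ m, |(j m : ℝ) - m * p| ≤ 2) :
    Tendsto (fun m : ℕ => Real.sqrt m * bern m (j m) p) atTop
      (𝓝 (1 / Real.sqrt (2 * π * (p * (1 - p))))) := by
  have hq : 0 < 1 - p := by linarith
  have hEv : ∀ᶠ m : ℕ in atTop, 1 ≤ j m ∧ j m + 1 ≤ m := by
    filter_upwards [ev_lb h0 3, ev_lb hq 3] with m hm3 hm3'
    have hjl := abs_le.1 (hj m)
    constructor
    · have : (1:ℝ) ≤ (j m : ℝ) := by linarith [hjl.2, hjl.1]
      exact_mod_cast this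
    · have : ((j m : ℝ)) + 1 ≤ (m:ℝ) := by nlinarith [hjl.2]
      exact_mod_cast this
  -- j → ∞, m - j → ∞
  have hjtop : Tendsto j atTop atTop := by
    rw [← tendsto_natCast_atTop_iff (R := ℝ)]
    refine tendsto_atTop_mono' atTop ?_ (tendsto_atTop_add_const_right _ (-2)
      (tendsto_natCast_atTop_atTop.atTop_mul_const h0))
    filter_upwards with m
    have := (abs_le.1 (hj m)).1
    linarith
  have hmjtop : Tendsto (fun m => m - j m) atTop atTop := by
    rw [← tendsto_natCast_atTop_iff (R := ℝ)]
    refine tendsto_atTop_mono' atTop ?_ (tendsto_atTop_add_const_right _ (-2)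
      (tendsto_natCast_atTop_atTop.atTop_mul_const hq))
    filter_upwards [hEv] with m hm
    have h2 := (abs_le.1 (hj m)).2
    rw [Nat.cast_sub (by omega : j m ≤ m)]
    nlinarith
  -- x m → p, y m → 1 - p
  have hx : Tendsto (fun m : ℕ => (j m : ℝ) / m) atTop (𝓝 p) := by
    have hlo : ∀ᶠ m : ℕ in atTop, p - 2 / m ≤ (j m : ℝ) / m := by
      filter_upwards [eventually_gt_atTop 0] with m hm
      have hmp : (0:ℝ) < m := by exact_mod_cast hm
      have h1' := (abs_le.1 (hj m)).1
      have : p - 2/(m:ℝ) = ((m:ℝ)*p - 2)/m := by field_simp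
      rw [this]
      gcongr
      linarith
    have hhi : ∀ᶠ m : ℕ in atTop, (j m : ℝ) / m ≤ p + 2 / m := by
      filter_upwards [eventually_gt_atTop 0] with m hm
      have hmp : (0:ℝ) < m := by exact_mod_cast hm
      have h2' := (abs_le.1 (hj m)).2
      have : p + 2/(m:ℝ) = ((m:ℝ)*p + 2)/m := by field_simp
      rw [this]
      gcongr
      linarith
    have hl : Tendsto (fun m : ℕ => p - 2 / (m:ℝ)) atTop (𝓝 p) := by
      have := tendsto_const_div_atTop_nhds_zero_nat (𝕜 := ℝ) 2
      simpa using tendsto_const_nhds.sub this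
    have hh : Tendsto (fun m : ℕ => p + 2 / (m:ℝ)) atTop (𝓝 p) := by
      have := tendsto_const_div_atTop_nhds_zero_nat (𝕜 := ℝ) 2
      simpa using tendsto_const_nhds.add this
    exact tendsto_of_tendsto_of_tendsto_of_le_of_le' hl hh hlo hhi
  have hy : Tendsto (fun m : ℕ => ((m:ℝ) - j m) / m) atTop (𝓝 (1 - p)) := by
    have heq : ∀ᶠ m : ℕ in atTop, 1 - (j m : ℝ)/m = ((m:ℝ) - j m)/m := by
      filter_upwards [eventually_gt_atTop 0] with m hm
      have hmp : (0:ℝ) < m := by exact_mod_cast hm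
      field_simp
    exact Tendsto.congr' heq (tendsto_const_nhds.sub hx)
  -- Factor 1
  have hF1 : Tendsto (fun m : ℕ => stirlingSeq m / (stirlingSeq (j m) * stirlingSeq (m - j m)))
      atTop (𝓝 (Real.sqrt π / (Real.sqrt π * Real.sqrt π))) := by
    exact tendsto_stirlingSeq_sqrt_pi.div
      ((tendsto_stirlingSeq_sqrt_pi.comp hjtop).mul (tendsto_stirlingSeq_sqrt_pi.comp hmjtop))
      (by positivity)
  -- Factor 2
  have hF2 : Tendsto (fun m : ℕ => Real.sqrt ((m:ℝ)*m/(2*(j m)*((m:ℝ)-(j m)))))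
      atTop (𝓝 (Real.sqrt (1/(2*p*(1-p))))) := by
    apply Filter.Tendsto.sqrt
    have heq : ∀ᶠ m : ℕ in atTop, 1 / (2 * ((j m : ℝ)/m) * (((m:ℝ) - j m)/m))
        = (m:ℝ)*m/(2*(j m)*((m:ℝ)-(j m))) := by
      filter_upwards [hEv, eventually_gt_atTop 0] with m hm hm0
      have hmp : (0:ℝ) < m := by exact_mod_cast hm0
      have hjp : (0:ℝ) < j m := by exact_mod_cast hm.1
      have hmjp : (0:ℝ) < (m:ℝ) - j m := by
        have : ((j m : ℝ)) + 1 ≤ m := by exact_mod_cast hm.2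
        linarith
      field_simp
      try ring
    refine Tendsto.congr' heq ?_
    have hden : Tendsto (fun m : ℕ => 2 * ((j m : ℝ)/m) * (((m:ℝ) - j m)/m)) atTop
        (𝓝 (2 * p * (1-p))) := ((tendsto_const_nhds.mul hx)).mul hy
    exact (tendsto_const_nhds.div hden (by positivity))
  -- Factor 3
  have hF3 : Tendsto (fun m : ℕ => ((m:ℝ)*p/(j m))^(j m) * ((m:ℝ)*(1-p)/((m:ℝ)-(j m)))^(m - j m))
      atTop (𝓝 1) := by
    set E : ℕ → ℝ := fun m => (j m : ℝ) * Real.log ((m:ℝ)*p/(j m))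
      + ((m:ℝ) - j m) * Real.log ((m:ℝ)*(1-p)/((m:ℝ)-(j m))) with hE
    have hEbound : ∀ᶠ m : ℕ in atTop,
        (-(4/(p*(1-p))))/(m:ℝ) ≤ E m ∧ E m ≤ 0 := by
      filter_upwards [hEv, eventually_gt_atTop 0] with m hm hm0
      have hmp : (0:ℝ) < m := by exact_mod_cast hm0
      have hjp : (0:ℝ) < j m := by exact_mod_cast hm.1
      have hkp : (0:ℝ) < (m:ℝ) - j m := by
        have : ((j m : ℝ)) + 1 ≤ m := by exact_mod_cast hm.2
        linarith
      have hap : (0:ℝ) < (m:ℝ)*p/(j m) := by positivity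
      have hbp : (0:ℝ) < (m:ℝ)*(1-p)/((m:ℝ)-(j m)) := by positivity
      constructor
      · -- lower bound
        have hla : Real.log ((m:ℝ)*p/(j m)) = - Real.log ((j m : ℝ)/((m:ℝ)*p)) := by
          rw [← Real.log_inv, inv_div]
        have hlb : Real.log ((m:ℝ)*(1-p)/((m:ℝ)-(j m)))
            = - Real.log (((m:ℝ)-(j m))/((m:ℝ)*(1-p))) := by
          rw [← Real.log_inv, inv_div]
        have h1a : Real.log ((j m : ℝ)/((m:ℝ)*p)) ≤ (j m : ℝ)/((m:ℝ)*p) - 1 :=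
          Real.log_le_sub_one_of_pos (by positivity)
        have h1b : Real.log (((m:ℝ)-(j m))/((m:ℝ)*(1-p))) ≤ ((m:ℝ)-(j m))/((m:ℝ)*(1-p)) - 1 :=
          Real.log_le_sub_one_of_pos (by positivity)
        have key : (j m : ℝ) * ((j m : ℝ)/((m:ℝ)*p) - 1)
            + ((m:ℝ) - j m) * (((m:ℝ)-(j m))/((m:ℝ)*(1-p)) - 1)
            = ((j m : ℝ) - (m:ℝ)*p)^2/((m:ℝ)*p*(1-p)) := by
          field_simp
          ring
        have hd2 : ((j m : ℝ) - (m:ℝ)*p)^2 ≤ 4 := by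
          have := abs_le.1 (hj m)
          nlinarith [this.1, this.2]
        have hfin : ((j m : ℝ) - (m:ℝ)*p)^2/((m:ℝ)*p*(1-p)) ≤ (4/(p*(1-p)))/(m:ℝ) := by
          rw [div_le_div_iff₀ (by positivity) hmp]
          have h4 : (0:ℝ) < (m:ℝ)*p*(1-p) := by positivity
          calc ((j m : ℝ) - (m:ℝ)*p)^2 * (m:ℝ) ≤ 4 * (m:ℝ) := by nlinarith
            _ = 4/(p*(1-p)) * ((m:ℝ)*p*(1-p)) := by field_simp
        have hmul1 : (j m : ℝ) * Real.log ((j m : ℝ)/((m:ℝ)*p))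
            ≤ (j m : ℝ) * ((j m : ℝ)/((m:ℝ)*p) - 1) :=
          mul_le_mul_of_nonneg_left h1a hjp.le
        have hmul2 : ((m:ℝ) - j m) * Real.log (((m:ℝ)-(j m))/((m:ℝ)*(1-p)))
            ≤ ((m:ℝ) - j m) * (((m:ℝ)-(j m))/((m:ℝ)*(1-p)) - 1) :=
          mul_le_mul_of_nonneg_left h1b hkp.le
        have hsum : (j m : ℝ) * Real.log ((j m : ℝ)/((m:ℝ)*p))
            + ((m:ℝ) - j m) * Real.log (((m:ℝ)-(j m))/((m:ℝ)*(1-p))) ≤ (4/(p*(1-p)))/(m:ℝ) :=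
          le_trans (add_le_add hmul1 hmul2) (key ▸ hfin)
        have hneg : (-(4/(p*(1-p))))/(m:ℝ) = -((4/(p*(1-p)))/(m:ℝ)) := neg_div _ _
        rw [hE]
        simp only [hla, hlb, mul_neg]
        rw [hneg]
        linarith [hsum]
      · -- upper bound
        have h1a : Real.log ((m:ℝ)*p/(j m)) ≤ (m:ℝ)*p/(j m) - 1 :=
          Real.log_le_sub_one_of_pos hap
        have h1b : Real.log ((m:ℝ)*(1-p)/((m:ℝ)-(j m))) ≤ (m:ℝ)*(1-p)/((m:ℝ)-(j m)) - 1 :=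
          Real.log_le_sub_one_of_pos hbp
        have hmul1 : (j m : ℝ) * Real.log ((m:ℝ)*p/(j m))
            ≤ (j m : ℝ) * ((m:ℝ)*p/(j m) - 1) := mul_le_mul_of_nonneg_left h1a hjp.le
        have hmul2 : ((m:ℝ) - j m) * Real.log ((m:ℝ)*(1-p)/((m:ℝ)-(j m)))
            ≤ ((m:ℝ) - j m) * ((m:ℝ)*(1-p)/((m:ℝ)-(j m)) - 1) := mul_le_mul_of_nonneg_left h1b hkp.le
        have e1 : (j m : ℝ) * ((m:ℝ)*p/(j m) - 1) = (m:ℝ)*p - j m := by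
          field_simp
        have e2 : ((m:ℝ) - j m) * ((m:ℝ)*(1-p)/((m:ℝ)-(j m)) - 1) = (m:ℝ)*(1-p) - ((m:ℝ) - j m) := by
          field_simp
        rw [hE]
        simp only
        linarith [hmul1, hmul2, e1, e2]
    have hEtendsto : Tendsto E atTop (𝓝 0) := by
      have hl : Tendsto (fun m : ℕ => (-(4/(p*(1-p))))/(m:ℝ)) atTop (𝓝 0) :=
        tendsto_const_div_atTop_nhds_zero_nat _
      exact tendsto_of_tendsto_of_tendsto_of_le_of_le' hl tendsto_const_nhds
        (hEbound.mono fun m h => h.1) (hEbound.mono fun m h => h.2)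
    have hexp : Tendsto (fun m : ℕ => Real.exp (E m)) atTop (𝓝 1) := by
      have := (Real.continuous_exp.tendsto 0).comp hEtendsto
      simpa [Function.comp_def] using this
    refine Tendsto.congr' ?_ hexp
    filter_upwards [hEv, eventually_gt_atTop 0] with m hm hm0
    have hmp : (0:ℝ) < m := by exact_mod_cast hm0
    have hjp : (0:ℝ) < j m := by exact_mod_cast hm.1
    have hkp : (0:ℝ) < (m:ℝ) - j m := by
      have : ((j m : ℝ)) + 1 ≤ m := by exact_mod_cast hm.2
      linarith
    have hap : (0:ℝ) < (m:ℝ)*p/(j m) := by positivity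
    have hbp : (0:ℝ) < (m:ℝ)*(1-p)/((m:ℝ)-(j m)) := by positivity
    have hkcast : ((m - j m : ℕ):ℝ) = (m:ℝ) - j m := by
      rw [Nat.cast_sub (by omega : j m ≤ m)]
    rw [hE]
    simp only
    rw [Real.exp_add]
    congr 1
    · rw [← Real.log_pow, Real.exp_log (pow_pos hap _)]
    · have hbp' : (0:ℝ) < (m:ℝ)*(1-p)/((m - j m : ℕ):ℝ) := by rw [hkcast]; exact hbp
      rw [← hkcast, ← Real.log_pow, Real.exp_log (pow_pos hbp' _)]
  -- combine
  have hlim : Tendsto (fun m : ℕ =>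
      (stirlingSeq m / (stirlingSeq (j m) * stirlingSeq (m - j m))) *
      Real.sqrt ((m:ℝ)*(m:ℝ)/(2*(j m)*((m:ℝ)-(j m)))) *
      (((m:ℝ)*p/(j m))^(j m) * ((m:ℝ)*(1-p)/((m:ℝ)-(j m)))^(m - j m))) atTop
      (𝓝 (Real.sqrt π / (Real.sqrt π * Real.sqrt π) * Real.sqrt (1/(2*p*(1-p))) * 1)) :=
    (hF1.mul hF2).mul hF3
  have hval : Real.sqrt π / (Real.sqrt π * Real.sqrt π) * Real.sqrt (1/(2*p*(1-p))) * 1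
      = 1 / Real.sqrt (2 * π * (p * (1 - p))) := by
    have hpi : (0:ℝ) < π := Real.pi_pos
    rw [mul_one, Real.mul_self_sqrt hpi.le]
    rw [div_mul_eq_mul_div, div_eq_div_iff hpi.ne' (Real.sqrt_pos.2 (by positivity)).ne']
    rw [one_mul, ← Real.sqrt_mul (by positivity), ← Real.sqrt_mul (by positivity)]
    rw [show π * (1 / (2*p*(1-p))) * (2*π*(p*(1-p))) = π*π by field_simp]
    exact Real.sqrt_mul_self hpi.le
  rw [← hval]
  refine Tendsto.congr' ?_ hlim
  filter_upwards [hEv] with m hm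
  have hmjc : ((m - j m : ℕ):ℝ) = (m:ℝ) - (j m : ℝ) := by
    rw [Nat.cast_sub (by omega : j m ≤ m)]
  rw [bern_factorization h0 h1 m (j m) hm.1 hm.2]

/-- For fixed `v ∈ (0,1)`, `∑_{k=0}^m |P'_{m,k}(v)|` is `O(m^{1/2})` as `m → ∞`, and is
asymptotically equivalent to `sqrt(2/π) · m^{1/2} / sqrt(v(1-v))`. -/
theorem bernstein_deriv_abs_sum_asymptotic (v : ℝ) (hv : v ∈ Set.Ioo (0:ℝ) 1) :
    (Asymptotics.IsBigO atTop
      (fun m : ℕ => ∑ k ∈ Finset.range (m + 1), |deriv (bern m k) v|)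
      (fun m : ℕ => (m : ℝ) ^ ((1:ℝ)/2))) ∧
    Tendsto
      (fun m : ℕ => (∑ k ∈ Finset.range (m + 1), |deriv (bern m k) v|) /
        (Real.sqrt (2 / Real.pi) * (m : ℝ) ^ ((1:ℝ)/2) / Real.sqrt (v * (1 - v))))
      atTop (nhds 1) := by
  obtain ⟨h0, h1⟩ := hv
  have hq : (0:ℝ) < 1 - v := by linarith
  set S : ℕ → ℝ := fun m => ∑ k ∈ Finset.range (m + 1), |deriv (bern m k) v| with hS
  set D : ℕ → ℝ := fun m => Real.sqrt (2 / π) * (m : ℝ) ^ ((1:ℝ)/2) / Real.sqrt (v * (1 - v)) with hD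
  -- the mode sequence
  set jf : ℕ → ℕ := fun n => ⌊((n:ℝ)+1)*v⌋₊ with hjf
  have hjbound : ∀ n : ℕ, |(jf n : ℝ) - n * v| ≤ 2 := by
    intro n
    have h1' : (jf n : ℝ) ≤ ((n:ℝ)+1)*v := Nat.floor_le (by positivity)
    have h2' : ((n:ℝ)+1)*v < (jf n : ℝ) + 1 := Nat.lt_floor_add_one _
    rw [abs_le]
    constructor <;> nlinarith
  have hkey := key_tendsto h0 h1 jf hjbound
  have hcomp : Tendsto (fun m : ℕ => Real.sqrt ((m-1 : ℕ)) * bern (m-1) (jf (m-1)) v) atTop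
      (𝓝 (1 / Real.sqrt (2 * π * (v * (1 - v))))) := hkey.comp (tendsto_sub_atTop_nat 1)
  -- replace √(m-1) by √m
  have hinv : Tendsto (fun m : ℕ => ((m:ℝ) - 1)⁻¹) atTop (𝓝 0) :=
    tendsto_inv_atTop_zero.comp (tendsto_atTop_add_const_right _ (-1) tendsto_natCast_atTop_atTop)
  have hratio : Tendsto (fun m : ℕ => Real.sqrt ((m:ℝ)/((m:ℝ)-1))) atTop (𝓝 1) := by
    have hfrac : Tendsto (fun m : ℕ => (m:ℝ)/((m:ℝ)-1)) atTop (𝓝 1) := by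
      have heq : ∀ᶠ m : ℕ in atTop, 1 + ((m:ℝ)-1)⁻¹ = (m:ℝ)/((m:ℝ)-1) := by
        filter_upwards [eventually_ge_atTop 2] with m hm
        have h2 : (2:ℝ) ≤ m := by exact_mod_cast hm
        have hne : (m:ℝ) - 1 ≠ 0 := by linarith
        field_simp
        ring
      have := Tendsto.congr' heq (tendsto_const_nhds.add hinv)
      simpa using this
    have := hfrac.sqrt
    simpa using this
  have hmain : Tendsto (fun m : ℕ => Real.sqrt m * bern (m-1) ⌊(m:ℝ)*v⌋₊ v) atTop
      (𝓝 (1 / Real.sqrt (2 * π * (v * (1 - v))))) := by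
    have hprod := hcomp.mul hratio
    rw [mul_one] at hprod
    refine Tendsto.congr' ?_ hprod
    filter_upwards [eventually_ge_atTop 2] with m hm
    have hm1 : (1:ℝ) ≤ (m:ℝ) - 1 := by
      have : (2:ℝ) ≤ m := by exact_mod_cast hm
      linarith
    have hc : ((m-1 : ℕ):ℝ) = (m:ℝ) - 1 := by
      rw [Nat.cast_sub (by omega : 1 ≤ m)]; norm_num
    have hjeq : jf (m-1) = ⌊(m:ℝ)*v⌋₊ := by
      simp only [hjf]
      congr 1
      rw [hc]
      ring
    have hsqrt1 : (0:ℝ) < Real.sqrt ((m:ℝ)-1) := Real.sqrt_pos.2 (by linarith)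
    rw [hjeq, hc, Real.sqrt_div (by linarith : (0:ℝ) ≤ (m:ℝ))]
    field_simp
  -- ratio of S to D
  have hSD : ∀ᶠ m : ℕ in atTop, S m / D m
      = (Real.sqrt m * bern (m-1) ⌊(m:ℝ)*v⌋₊ v) * (2 * Real.sqrt (v*(1-v)) / Real.sqrt (2/π)) := by
    filter_upwards [eventually_ge_atTop 1] with m hm
    have hms : Real.sqrt (m:ℝ) * Real.sqrt (m:ℝ) = (m:ℝ) := Real.mul_self_sqrt (Nat.cast_nonneg m)
    have hsm : (0:ℝ) < Real.sqrt m := Real.sqrt_pos.2 (by exact_mod_cast Nat.pos_of_ne_zero (by omega))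
    have hs2 : (0:ℝ) < Real.sqrt (2/π) := Real.sqrt_pos.2 (by positivity)
    have hsv : (0:ℝ) < Real.sqrt (v*(1-v)) := Real.sqrt_pos.2 (by positivity)
    rw [hS, hD]
    simp only
    rw [sum_abs_deriv h0 h1 hm, ← Real.sqrt_eq_rpow]
    rw [show (2:ℝ) * (m:ℕ) = 2 * (Real.sqrt (m:ℝ) * Real.sqrt (m:ℝ)) by rw [hms]]
    field_simp
  have hTend : Tendsto (fun m : ℕ => S m / D m) atTop (𝓝 1) := by
    have hprod := hmain.mul (tendsto_const_nhds (x := 2 * Real.sqrt (v*(1-v)) / Real.sqrt (2/π)))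
    have hval : (1 / Real.sqrt (2 * π * (v * (1 - v)))) * (2 * Real.sqrt (v*(1-v)) / Real.sqrt (2/π)) = 1 := by
      have hpi : (0:ℝ) < π := Real.pi_pos
      have hkey2 : Real.sqrt (2 * π * (v * (1 - v))) * Real.sqrt (2/π) = 2 * Real.sqrt (v*(1-v)) := by
        rw [← Real.sqrt_mul (by positivity)]
        rw [show 2 * π * (v * (1 - v)) * (2/π) = 4 * (v*(1-v)) by field_simp; ring]
        rw [Real.sqrt_mul (by norm_num : (0:ℝ) ≤ 4)]
        rw [show (4:ℝ) = 2^2 by norm_num, Real.sqrt_sq (by norm_num : (0:ℝ) ≤ 2)]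
      have hsp : (0:ℝ) < Real.sqrt (2 * π * (v * (1 - v))) := Real.sqrt_pos.2 (by positivity)
      have hs2 : (0:ℝ) < Real.sqrt (2/π) := Real.sqrt_pos.2 (by positivity)
      rw [_root_.div_mul_div_comm, one_mul, hkey2, div_self (by positivity)]
    rw [hval] at hprod
    exact Tendsto.congr' (hSD.mono fun m h => h.symm) hprod
  constructor
  · have hO1 : Asymptotics.IsBigO atTop S D := by
      apply Asymptotics.isBigO_of_div_tendsto_nhds _ 1 hTend
      filter_upwards with m hm
      have hs2 : (0:ℝ) < Real.sqrt (2/π) := Real.sqrt_pos.2 (by positivity)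
      have hsv : (0:ℝ) < Real.sqrt (v*(1-v)) := Real.sqrt_pos.2 (by positivity)
      have hm0 : ((m:ℝ)) ^ ((1:ℝ)/2) = 0 := by
        rw [hD] at hm
        simp only at hm
        rcases mul_eq_zero.1 (div_eq_zero_iff.1 hm |>.resolve_right hsv.ne') with h | h
        · exact absurd h hs2.ne'
        · exact h
      have : (m:ℝ) = 0 :=
        ((Real.rpow_eq_zero_iff_of_nonneg (Nat.cast_nonneg m)).1 hm0).1
      have hmz : m = 0 := by exact_mod_cast this
      subst hmz
      rw [hS]
      simp only
      rw [Finset.sum_range_one]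
      have : bern 0 0 = fun _ : ℝ => (1:ℝ) := by
        funext x; simp [bern]
      rw [this, deriv_const]
      simp
    have hO2 : Asymptotics.IsBigO atTop D (fun m : ℕ => (m : ℝ) ^ ((1:ℝ)/2)) := by
      have : D = fun m : ℕ => (Real.sqrt (2/π) / Real.sqrt (v*(1-v))) * (m : ℝ) ^ ((1:ℝ)/2) := by
        funext m; rw [hD]; ring
      rw [this]
      exact (Asymptotics.isBigO_refl _ _).const_mul_left _
    exact hO1.trans hO2
  · exact hTend
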